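/- Every totally mixed Nash equilibrium of a finite extensive-form game with perfect information is subgame perfect: the strategy profile it induces on the subgame rooted at any node is a Nash equilibrium of that subgame. -/
import Mathlib


/-- A finite extensive-form game tree: leaves carry payoff vectors, chance
nodes carry edge weights, player nodes carry the acting player's label. -/
inductive GameTree (N : ℕ) : Type
  | leaf (payoff : Fin N → ℝ)
  | chance (n : ℕ) (wt : Fin n → ℝ) (children : Fin n → GameTree N)
  | node (player : Fin N) (n : ℕ) (children : Fin n → GameTree N)

namespace GameTree

variable {N : ℕ}

/-- A behavioral strategy profile: at each node address, a probability for
each child index. -/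
abbrev Profile := List ℕ → ℕ → ℝ

/-- Chance weights are positive and sum to 1; all branching is nonempty. -/
def ValidWeights : GameTree N → Prop
  | leaf _ => True
  | chance n wt cs => 0 < n ∧ (∀ k, 0 < wt k) ∧ (∑ k, wt k) = 1 ∧ ∀ k, (cs k).ValidWeights
  | node _ n cs => 0 < n ∧ ∀ k, (cs k).ValidWeights

/-- The subtree at a given address (list of child indices), if any. -/
def nodeAt : GameTree N → List ℕ → Option (GameTree N)
  | t, [] => some t
  | leaf _, _ :: _ => none
  | chance n _ cs, k :: r => if h : k < n then (cs ⟨k, h⟩).nodeAt r else none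
  | node _ n cs, k :: r => if h : k < n then (cs ⟨k, h⟩).nodeAt r else none

/-- The player acting at a given address, if any. -/
def actor (t : GameTree N) (p : List ℕ) : Option (Fin N) :=
  match t.nodeAt p with
  | some (node i _ _) => some i
  | _ => none

/-- Probability, under profile `σ`, of the path descending from the current
subtree along the given child indices; `p` is the address of the current
subtree in the whole tree. -/
noncomputable def pathProb (σ : Profile) : GameTree N → List ℕ → List ℕ → ℝ
  | _, _, [] => 1
  | leaf _, _, _ :: _ => 0
  | chance n wt cs, p, k :: r =>
      if h : k < n then wt ⟨k, h⟩ * pathProb σ (cs ⟨k, h⟩) (p ++ [k]) r else 0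
  | node _ n cs, p, k :: r =>
      if h : k < n then σ p k * pathProb σ (cs ⟨k, h⟩) (p ++ [k]) r else 0

/-- The list of addresses of all leaves of the tree. -/
def leaves : GameTree N → List (List ℕ)
  | leaf _ => [[]]
  | chance n _ cs => (List.finRange n).flatMap fun k => ((cs k).leaves).map (k.val :: ·)
  | node _ n cs => (List.finRange n).flatMap fun k => ((cs k).leaves).map (k.val :: ·)

/-- Payoff to player `i` at the leaf with the given address (0 if invalid). -/
noncomputable def payoffAt : GameTree N → List ℕ → Fin N → ℝ
  | leaf u, [], i => u i
  | chance n _ cs, k :: r, i => if h : k < n then (cs ⟨k, h⟩).payoffAt r i else 0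
  | node _ n cs, k :: r, i => if h : k < n then (cs ⟨k, h⟩).payoffAt r i else 0
  | _, _, _ => 0

/-- Expected utility of player `i` under profile `σ`:
`u_i(σ) = Σ_λ u_i(λ) Pr[λ|σ]`. -/
noncomputable def util (σ : Profile) (t : GameTree N) (i : Fin N) : ℝ :=
  (t.leaves.map fun l => t.payoffAt l i * pathProb σ t [] l).sum

/-- The profile induced on the subgame rooted at address `ν`. -/
def induced (σ : Profile) (ν : List ℕ) : Profile := fun p => σ (ν ++ p)

/-- The behavioral profile corresponding to a pure strategy profile. -/
def pureProfile (s : List ℕ → ℕ) : Profile := fun p k => if s p = k then 1 else 0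

/-- A pure strategy profile selects an actual outgoing edge at each player node. -/
def ValidPure (t : GameTree N) (s : List ℕ → ℕ) : Prop :=
  ∀ p i m cs, t.nodeAt p = some (node i m cs) → s p < m

/-- A behavioral profile is a genuine probability assignment at each player node. -/
def ValidProfile (t : GameTree N) (σ : Profile) : Prop :=
  ∀ p i m cs, t.nodeAt p = some (node i m cs) →
    (∀ k < m, 0 ≤ σ p k) ∧ (∑ k ∈ Finset.range m, σ p k) = 1

/-- A totally mixed behavioral profile: every edge at every player node gets
strictly positive probability. -/
def TotallyMixed (t : GameTree N) (σ : Profile) : Prop :=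
  ∀ p i m cs, t.nodeAt p = some (node i m cs) →
    (∀ k < m, 0 < σ p k) ∧ (∑ k ∈ Finset.range m, σ p k) = 1

/-- The profile where player `j` deviates from `σ` to the pure strategy `s`. -/
def dev (t : GameTree N) (σ : Profile) (j : Fin N) (s : List ℕ → ℕ) : Profile :=
  fun p k => if t.actor p = some j then pureProfile s p k else σ p k

/-- Nash equilibrium: no player can improve by a unilateral pure deviation. -/
def IsNash (t : GameTree N) (σ : Profile) : Prop :=
  ∀ j : Fin N, ∀ s : List ℕ → ℕ, ValidPure t s → util (dev t σ j s) t j ≤ util σ t j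

/-- Subgame perfection: the induced profile is a Nash equilibrium of every subgame. -/
def IsSubgamePerfect (t : GameTree N) (σ : Profile) : Prop :=
  ∀ ν t', t.nodeAt ν = some t' → IsNash t' (induced σ ν)

/-- Every player is indifferent among all of their pure strategies. -/
def Indifferent (t : GameTree N) (σ : Profile) : Prop :=
  ∀ j : Fin N, ∀ s₁ s₂ : List ℕ → ℕ, ValidPure t s₁ → ValidPure t s₂ →
    util (dev t σ j s₁) t j = util (dev t σ j s₂) t j

/-- Player `j` is indifferent among all of `j`'s pure strategies. -/
def IndifferentFor (t : GameTree N) (σ : Profile) (j : Fin N) : Prop :=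
  ∀ s₁ s₂ : List ℕ → ℕ, ValidPure t s₁ → ValidPure t s₂ →
    util (dev t σ j s₁) t j = util (dev t σ j s₂) t j

end GameTree
namespace GameTree

variable {N : ℕ}

/-- Expected utility with an address offset. -/
noncomputable def U (σ : Profile) (t : GameTree N) (p : List ℕ) (i : Fin N) : ℝ :=
  (t.leaves.map fun l => t.payoffAt l i * pathProb σ t p l).sum

lemma util_eq_U (σ : Profile) (t : GameTree N) (i : Fin N) : util σ t i = U σ t [] i := rfl

lemma nodeAt_append (t : GameTree N) (p q : List ℕ) :
    t.nodeAt (p ++ q) = (t.nodeAt p).bind (fun t' => t'.nodeAt q) := by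
  induction p generalizing t with
  | nil => simp [nodeAt]
  | cons k r ih =>
    cases t with
    | leaf u => simp [nodeAt]
    | chance n wt cs =>
      simp only [List.cons_append, nodeAt]
      split <;> simp [ih]
    | node i n cs =>
      simp only [List.cons_append, nodeAt]
      split <;> simp [ih]

lemma nodeAt_append_some {t t' : GameTree N} {p : List ℕ} (h : t.nodeAt p = some t')
    (q : List ℕ) : t.nodeAt (p ++ q) = t'.nodeAt q := by
  rw [nodeAt_append, h]; rfl

lemma actor_append {t t' : GameTree N} {p : List ℕ} (h : t.nodeAt p = some t')
    (q : List ℕ) : t.actor (p ++ q) = t'.actor q := by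
  unfold actor
  rw [nodeAt_append_some h]

lemma pathProb_congr {σ₁ σ₂ : Profile} :
    ∀ (l : List ℕ) (t : GameTree N) (p : List ℕ), (∀ q, σ₁ (p ++ q) = σ₂ (p ++ q)) →
      pathProb σ₁ t p l = pathProb σ₂ t p l := by
  intro l
  induction l with
  | nil => intro t p h; simp [pathProb]
  | cons k r ih =>
    intro t p h
    cases t with
    | leaf u => simp [pathProb]
    | chance n wt cs =>
      simp only [pathProb]
      split
      · rw [ih _ (p ++ [k]) (fun q => by rw [List.append_assoc]; exact h _)]
      · rfl
    | node i n cs =>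
      simp only [pathProb]
      split
      · have h0 : σ₁ p = σ₂ p := by have := h []; simpa using this
        rw [h0, ih _ (p ++ [k]) (fun q => by rw [List.append_assoc]; exact h _)]
      · rfl

lemma U_congr {σ₁ σ₂ : Profile} (t : GameTree N) (p : List ℕ) (i : Fin N)
    (h : ∀ q, σ₁ (p ++ q) = σ₂ (p ++ q)) : U σ₁ t p i = U σ₂ t p i := by
  unfold U
  congr 1
  apply List.map_congr_left
  intro l _
  rw [pathProb_congr l t p h]

lemma pathProb_shift (σ : Profile) (ν : List ℕ) :
    ∀ (l : List ℕ) (t : GameTree N) (p : List ℕ),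
      pathProb σ t (ν ++ p) l = pathProb (induced σ ν) t p l := by
  intro l
  induction l with
  | nil => intro t p; simp [pathProb]
  | cons k r ih =>
    intro t p
    cases t with
    | leaf u => simp [pathProb]
    | chance n wt cs =>
      simp only [pathProb]
      split
      · rw [List.append_assoc, ih]
      · rfl
    | node i n cs =>
      simp only [pathProb]
      split
      · rw [List.append_assoc, ih]; rfl
      · rfl

lemma U_shift (σ : Profile) (t : GameTree N) (ν : List ℕ) (i : Fin N) :
    U σ t ν i = util (induced σ ν) t i := by
  unfold U util
  congr 1
  apply List.map_congr_left
  intro l _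
  have h := pathProb_shift σ ν l t []
  rw [List.append_nil] at h
  rw [h]


lemma sum_flatMap' {α : Type*} (l : List α) (f : α → List ℝ) :
    (l.flatMap f).sum = (l.map fun a => (f a).sum).sum := by
  induction l with
  | nil => simp
  | cons a l ih => simp [List.flatMap_cons, ih]

lemma U_leaf (σ : Profile) (u : Fin N → ℝ) (p : List ℕ) (i : Fin N) :
    U σ (leaf u) p i = u i := by
  simp [U, leaves, payoffAt, pathProb]

lemma U_chance (σ : Profile) {n : ℕ} (wt : Fin n → ℝ) (cs : Fin n → GameTree N)
    (p : List ℕ) (i : Fin N) :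
    U σ (chance n wt cs) p i = ∑ k : Fin n, wt k * U σ (cs k) (p ++ [k.val]) i := by
  unfold U
  rw [Fin.sum_univ_def]
  simp only [leaves, List.map_flatMap, List.map_map]
  rw [sum_flatMap']
  congr 1
  apply List.map_congr_left
  intro k _
  simp only [Function.comp_def, payoffAt, pathProb, k.isLt, dif_pos, Fin.eta]
  rw [← List.sum_map_mul_left]
  congr 1
  apply List.map_congr_left
  intro l _
  ring

lemma U_node (σ : Profile) (i₀ : Fin N) {n : ℕ} (cs : Fin n → GameTree N)
    (p : List ℕ) (i : Fin N) :
    U σ (node i₀ n cs) p i = ∑ k : Fin n, σ p k.val * U σ (cs k) (p ++ [k.val]) i := by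
  unfold U
  rw [Fin.sum_univ_def]
  simp only [leaves, List.map_flatMap, List.map_map]
  rw [sum_flatMap']
  congr 1
  apply List.map_congr_left
  intro k _
  simp only [Function.comp_def, payoffAt, pathProb, k.isLt, dif_pos, Fin.eta]
  rw [← List.sum_map_mul_left]
  congr 1
  apply List.map_congr_left
  intro l _
  ring

end GameTree
namespace GameTree
variable {N : ℕ}

lemma validWeights_nodeAt :
    ∀ (p : List ℕ) (t t' : GameTree N), t.ValidWeights → t.nodeAt p = some t' →
      t'.ValidWeights := by
  intro p
  induction p with
  | nil => intro t t' hw h; simp [nodeAt] at h; rwa [← h]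
  | cons k r ih =>
    intro t t' hw h
    cases t with
    | leaf u => simp [nodeAt] at h
    | chance n wt cs =>
      simp only [nodeAt] at h
      split at h
      · simp only [ValidWeights] at hw
        exact ih _ _ (hw.2.2.2 _) h
      · cases h
    | node i n cs =>
      simp only [nodeAt] at h
      split at h
      · simp only [ValidWeights] at hw
        exact ih _ _ (hw.2 _) h
      · cases h

lemma branch_lt {t : GameTree N} {p : List ℕ} {i : Fin N} {m : ℕ} {cs : Fin m → GameTree N}
    (h : t.nodeAt p = some (node i m cs)) {k : ℕ} {r : List ℕ} {t'' : GameTree N}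
    (h2 : t.nodeAt (p ++ k :: r) = some t'') : k < m := by
  rw [nodeAt_append_some h] at h2
  simp only [nodeAt] at h2
  by_contra hk
  rw [dif_neg hk] at h2
  cases h2

/-- `s` is a valid pure strategy for subtree `t'` sitting at address `p`. -/
def VP (t' : GameTree N) (p : List ℕ) (s : List ℕ → ℕ) : Prop :=
  ∀ q i m cs, t'.nodeAt q = some (node i m cs) → s (p ++ q) < m

lemma sum_pure {n : ℕ} {s : ℕ} (hs : s < n) (x : Fin n → ℝ) :
    ∑ k : Fin n, (if s = k.val then (1:ℝ) else 0) * x k = x ⟨s, hs⟩ := by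
  rw [Finset.sum_eq_single (⟨s, hs⟩ : Fin n)]
  · simp
  · intro k _ hk
    have : ¬ s = k.val := by
      intro h
      exact hk (by ext; simp [← h])
    simp [this]
  · simp

lemma getD_append_cons (p : List ℕ) (k : ℕ) (r : List ℕ) :
    (p ++ k :: r).getD p.length 0 = k := by
  rw [List.getD_append_right p (k :: r) 0 p.length le_rfl]
  simp

/-- Combine child strategies into one. -/
def comb (p : List ℕ) (n : ℕ) (s : Fin n → List ℕ → ℕ) (root : ℕ) : List ℕ → ℕ :=
  fun q => if q = p then root
    else if h : p.length < q.length ∧ p <+: q ∧ q.getD p.length 0 < n then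
      s ⟨q.getD p.length 0, h.2.2⟩ q else 0

lemma comb_root (p : List ℕ) (n : ℕ) (s : Fin n → List ℕ → ℕ) (root : ℕ) :
    comb p n s root p = root := by simp [comb]

lemma comb_ext (p : List ℕ) {n : ℕ} (s : Fin n → List ℕ → ℕ) (root : ℕ) (k : Fin n)
    (r : List ℕ) : comb p n s root (p ++ k.val :: r) = s k (p ++ k.val :: r) := by
  have hne : p ++ k.val :: r ≠ p := by
    intro h
    have := congrArg List.length h
    simp at this
  have hlen : p.length < (p ++ k.val :: r).length := by simp
  have hpre : p <+: p ++ k.val :: r := List.prefix_append _ _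
  have hg : (p ++ k.val :: r).getD p.length 0 = k.val := getD_append_cons _ _ _
  rw [comb, if_neg hne, dif_pos ⟨hlen, hpre, by rw [hg]; exact k.isLt⟩]
  congr 1
  exact Fin.ext hg

end GameTree
namespace GameTree
variable {N : ℕ}

lemma U_sub {π₁ π₂ : Profile} (j : Fin N) :
    ∀ (ν : List ℕ) (t : GameTree N) (p : List ℕ) (t' : GameTree N),
      t.nodeAt ν = some t' →
      (∀ q, ¬ ν <+: q → π₁ (p ++ q) = π₂ (p ++ q)) →
      U π₁ t p j - U π₂ t p j
        = pathProb π₁ t p ν * (U π₁ t' (p ++ ν) j - U π₂ t' (p ++ ν) j) := by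
  intro ν
  induction ν with
  | nil =>
    intro t p t' h _
    simp only [nodeAt, Option.some_inj] at h
    subst h
    simp [pathProb]
  | cons k r ih =>
    intro t p t' h hagree
    cases t with
    | leaf u => simp [nodeAt] at h
    | chance n wt cs =>
      simp only [nodeAt] at h
      split at h
      case isFalse => cases h
      case isTrue hk =>
        rw [U_chance, U_chance, ← Finset.sum_sub_distrib]
        simp only [pathProb, dif_pos hk]
        rw [Finset.sum_eq_single (⟨k, hk⟩ : Fin n)]
        · have := ih (cs ⟨k, hk⟩) (p ++ [k]) t' h (by
            intro q hq
            rw [List.append_assoc]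
            exact hagree (k :: q) (by
              intro hpre
              exact hq (by
                rcases hpre with ⟨u, hu⟩
                exact ⟨u, by injection hu⟩)))
          rw [← mul_sub, this]
          rw [List.append_assoc]
          simp only [List.singleton_append]
          ring
        · intro b _ hb
          have : U π₁ (cs b) (p ++ [b.val]) j = U π₂ (cs b) (p ++ [b.val]) j := by
            apply U_congr
            intro q
            rw [List.append_assoc]
            apply hagree
            intro hpre
            rcases hpre with ⟨u, hu⟩
            simp only [List.cons_append] at hu
            apply hb
            injection hu with h1 _
            exact Fin.ext h1.symm
          rw [this]
          ring
        · simp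
    | node i n cs =>
      simp only [nodeAt] at h
      split at h
      case isFalse => cases h
      case isTrue hk =>
        have hp : π₁ p = π₂ p := by
          have := hagree [] (by simp)
          simpa using this
        rw [U_node, U_node, hp, ← Finset.sum_sub_distrib]
        simp only [pathProb, dif_pos hk]
        rw [Finset.sum_eq_single (⟨k, hk⟩ : Fin n)]
        · have := ih (cs ⟨k, hk⟩) (p ++ [k]) t' h (by
            intro q hq
            rw [List.append_assoc]
            exact hagree (k :: q) (by
              intro hpre
              exact hq (by
                rcases hpre with ⟨u, hu⟩
                exact ⟨u, by injection hu⟩)))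
          rw [← mul_sub, this]
          rw [List.append_assoc]
          simp only [List.singleton_append]
          rw [hp]
          ring
        · intro b _ hb
          have : U π₁ (cs b) (p ++ [b.val]) j = U π₂ (cs b) (p ++ [b.val]) j := by
            apply U_congr
            intro q
            rw [List.append_assoc]
            apply hagree
            intro hpre
            rcases hpre with ⟨u, hu⟩
            simp only [List.cons_append] at hu
            apply hb
            injection hu with h1 _
            exact Fin.ext h1.symm
          rw [this]
          ring
        · simp

lemma pathProb_pos {π : Profile} :
    ∀ (ν : List ℕ) (t : GameTree N) (p : List ℕ), (t.nodeAt ν).isSome → t.ValidWeights →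
      (∀ q k r i m cs, ν = q ++ k :: r → t.nodeAt q = some (node i m cs) →
        0 < π (p ++ q) k) →
      0 < pathProb π t p ν := by
  intro ν
  induction ν with
  | nil => intro t p _ _ _; simp [pathProb]
  | cons k r ih =>
    intro t p hs hw hpos
    cases t with
    | leaf u => simp [nodeAt] at hs
    | chance n wt cs =>
      simp only [nodeAt] at hs
      by_cases hk : k < n
      · rw [dif_pos hk] at hs
        simp only [pathProb, dif_pos hk]
        simp only [ValidWeights] at hw
        refine mul_pos (hw.2.1 _) (ih _ _ hs (hw.2.2.2 _) ?_)
        intro q k' r' i m cs' hr hq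
        have := hpos (k :: q) k' r' i m cs' (by rw [hr]; rfl)
          (by simp only [nodeAt, dif_pos hk]; exact hq)
        simpa [List.append_assoc] using this
      · rw [dif_neg hk] at hs; cases hs
    | node i n cs =>
      simp only [nodeAt] at hs
      by_cases hk : k < n
      · rw [dif_pos hk] at hs
        simp only [pathProb, dif_pos hk]
        simp only [ValidWeights] at hw
        refine mul_pos ?_ (ih _ _ hs (hw.2 _) ?_)
        · have := hpos [] k r i n cs rfl (by simp [nodeAt])
          simpa using this
        · intro q k' r' i' m cs' hr hq
          have := hpos (k :: q) k' r' i' m cs' (by rw [hr]; rfl)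
            (by simp only [nodeAt, dif_pos hk]; exact hq)
          simpa [List.append_assoc] using this
      · rw [dif_neg hk] at hs; cases hs

end GameTree
namespace GameTree
variable {N : ℕ}

lemma nodeAt_child_chance {n : ℕ} (wt : Fin n → ℝ) (cs : Fin n → GameTree N) (k : Fin n) :
    (chance n wt cs).nodeAt [k.val] = some (cs k) := by
  simp [nodeAt, k.isLt]

lemma nodeAt_child_node {n : ℕ} (i₀ : Fin N) (cs : Fin n → GameTree N) (k : Fin n) :
    (node i₀ n cs).nodeAt [k.val] = some (cs k) := by
  simp [nodeAt, k.isLt]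

lemma U_dev_comb (t : GameTree N) (σ : Profile) (j : Fin N) {n : ℕ}
    (sk : Fin n → List ℕ → ℕ) (root : ℕ) (p : List ℕ) (k : Fin n) (c : GameTree N)
    (i : Fin N) :
    U (dev t σ j (comb p n sk root)) c (p ++ [k.val]) i
      = U (dev t σ j (sk k)) c (p ++ [k.val]) i := by
  apply U_congr
  intro q
  funext k'
  simp only [dev, pureProfile]
  rw [List.append_assoc, List.singleton_append, comb_ext]

lemma VP_comb_chance {n : ℕ} {wt : Fin n → ℝ} {cs : Fin n → GameTree N} {p : List ℕ}
    {sk : Fin n → List ℕ → ℕ} (h : ∀ k : Fin n, VP (cs k) (p ++ [k.val]) (sk k))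
    (root : ℕ) : VP (chance n wt cs) p (comb p n sk root) := by
  intro q i m cs' hq
  cases q with
  | nil => simp [nodeAt] at hq
  | cons k r =>
    simp only [nodeAt] at hq
    split at hq
    case isFalse => cases hq
    case isTrue hk =>
      have h2 := h ⟨k, hk⟩ r i m cs' hq
      rw [List.append_assoc, List.singleton_append] at h2
      exact (show comb p n sk root (p ++ k :: r) = sk ⟨k, hk⟩ (p ++ k :: r) from
        comb_ext p sk root ⟨k, hk⟩ r) ▸ h2

lemma VP_comb_node {n : ℕ} {i₀ : Fin N} {cs : Fin n → GameTree N} {p : List ℕ}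
    {sk : Fin n → List ℕ → ℕ} (h : ∀ k : Fin n, VP (cs k) (p ++ [k.val]) (sk k))
    {root : ℕ} (hroot : root < n) : VP (node i₀ n cs) p (comb p n sk root) := by
  intro q i m cs' hq
  cases q with
  | nil =>
    simp only [nodeAt, Option.some_inj] at hq
    injection hq with h1 h2 h3
    subst h2
    rw [List.append_nil, comb_root]
    exact hroot
  | cons k r =>
    simp only [nodeAt] at hq
    split at hq
    case isFalse => cases hq
    case isTrue hk =>
      have h2 := h ⟨k, hk⟩ r i m cs' hq
      rw [List.append_assoc, List.singleton_append] at h2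
      exact (show comb p n sk root (p ++ k :: r) = sk ⟨k, hk⟩ (p ++ k :: r) from
        comb_ext p sk root ⟨k, hk⟩ r) ▸ h2

lemma actor_eq {t : GameTree N} {p : List ℕ} {i : Fin N} {n : ℕ} {cs : Fin n → GameTree N}
    (hp : t.nodeAt p = some (node i n cs)) : t.actor p = some i := by
  unfold actor; rw [hp]

lemma U_dev_collapse (t : GameTree N) (σ : Profile) {j : Fin N} {n : ℕ}
    {cs : Fin n → GameTree N} {p : List ℕ}
    (hp : t.nodeAt p = some (node j n cs)) (s : List ℕ → ℕ) (hs : s p < n) (i : Fin N) :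
    U (dev t σ j s) (node j n cs) p i
      = U (dev t σ j s) (cs ⟨s p, hs⟩) (p ++ [s p]) i := by
  rw [U_node]
  have ha := actor_eq hp
  have hd : ∀ k : Fin n, dev t σ j s p k.val = if s p = k.val then 1 else 0 := by
    intro k; simp [dev, ha, pureProfile]
  simp only [hd]
  rw [sum_pure hs]

lemma exists_pure_le (t : GameTree N) (σ : Profile) (j : Fin N) (hw : t.ValidWeights)
    (hm : TotallyMixed t σ) :
    ∀ (t' : GameTree N) (p : List ℕ), t.nodeAt p = some t' →
      ∃ s, VP t' p s ∧ U (dev t σ j s) t' p j ≤ U σ t' p j := by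
  intro t'
  induction t' with
  | leaf u =>
    intro p hp
    refine ⟨fun _ => 0, ?_, by rw [U_leaf, U_leaf]⟩
    intro q i m cs hq
    cases q with
    | nil => simp [nodeAt] at hq
    | cons k r => simp [nodeAt] at hq
  | chance n wt cs ih =>
    intro p hp
    have hw' := validWeights_nodeAt p t _ hw hp
    simp only [ValidWeights] at hw'
    choose sk h1 h2 using fun k : Fin n => ih k (p ++ [k.val])
      (by rw [nodeAt_append_some hp]; exact nodeAt_child_chance wt cs k)
    refine ⟨comb p n sk 0, VP_comb_chance h1 0, ?_⟩
    rw [U_chance, U_chance]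
    apply Finset.sum_le_sum
    intro k _
    rw [U_dev_comb]
    exact mul_le_mul_of_nonneg_left (h2 k) (le_of_lt (hw'.2.1 k))
  | node i n cs ih =>
    intro p hp
    have hw' := validWeights_nodeAt p t _ hw hp
    simp only [ValidWeights] at hw'
    obtain ⟨hn, -⟩ := hw'
    have hmp := hm p i n cs hp
    have ha := actor_eq hp
    choose sk h1 h2 using fun k : Fin n => ih k (p ++ [k.val])
      (by rw [nodeAt_append_some hp]; exact nodeAt_child_node i cs k)
    have hsum : ∑ k : Fin n, σ p k.val = 1 := by rw [← Finset.sum_range]; exact hmp.2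
    by_cases hij : i = j
    · subst hij
      obtain ⟨km, -, hkm⟩ := Finset.exists_min_image Finset.univ
        (fun k : Fin n => U σ (cs k) (p ++ [k.val]) i) ⟨⟨0, hn⟩, Finset.mem_univ _⟩
      refine ⟨comb p n sk km.val, VP_comb_node h1 km.isLt, ?_⟩
      have hroot : comb p n sk km.val p = km.val := comb_root p n sk km.val
      rw [U_dev_collapse t σ hp _ (by rw [hroot]; exact km.isLt)]
      have e1 : U (dev t σ i (comb p n sk km.val))
          (cs ⟨comb p n sk km.val p, by rw [hroot]; exact km.isLt⟩)
          (p ++ [comb p n sk km.val p]) i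
          = U (dev t σ i (sk km)) (cs km) (p ++ [km.val]) i := by
        have : (⟨comb p n sk km.val p, by rw [hroot]; exact km.isLt⟩ : Fin n) = km :=
          Fin.ext hroot
        rw [this, hroot]
        exact U_dev_comb t σ i sk km.val p km (cs km) i
      rw [e1]
      refine le_trans (h2 km) ?_
      rw [U_node]
      have e2 : U σ (cs km) (p ++ [km.val]) i
          = ∑ k : Fin n, σ p k.val * U σ (cs km) (p ++ [km.val]) i := by
        rw [← Finset.sum_mul, hsum, one_mul]
      rw [e2]
      apply Finset.sum_le_sum
      intro k _
      exact mul_le_mul_of_nonneg_left (hkm k (Finset.mem_univ k))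
        (le_of_lt (hmp.1 k.val k.isLt))
    · have hdev : ∀ s k', dev t σ j s p k' = σ p k' := by
        intro s k'
        simp only [dev, ha, Option.some_inj]
        rw [if_neg hij]
      refine ⟨comb p n sk 0, VP_comb_node h1 hn, ?_⟩
      rw [U_node, U_node]
      apply Finset.sum_le_sum
      intro k _
      rw [hdev, U_dev_comb]
      exact mul_le_mul_of_nonneg_left (h2 k) (le_of_lt (hmp.1 k.val k.isLt))

end GameTree
namespace GameTree
variable {N : ℕ}

lemma exists_pure_ge (t : GameTree N) (σ : Profile) (j : Fin N) (hw : t.ValidWeights)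
    (hm : TotallyMixed t σ) :
    ∀ (t' : GameTree N) (p : List ℕ), t.nodeAt p = some t' →
      ∃ s, VP t' p s ∧ U σ t' p j ≤ U (dev t σ j s) t' p j := by
  intro t'
  induction t' with
  | leaf u =>
    intro p hp
    refine ⟨fun _ => 0, ?_, by rw [U_leaf, U_leaf]⟩
    intro q i m cs hq
    cases q with
    | nil => simp [nodeAt] at hq
    | cons k r => simp [nodeAt] at hq
  | chance n wt cs ih =>
    intro p hp
    have hw' := validWeights_nodeAt p t _ hw hp
    simp only [ValidWeights] at hw'
    choose sk h1 h2 using fun k : Fin n => ih k (p ++ [k.val])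
      (by rw [nodeAt_append_some hp]; exact nodeAt_child_chance wt cs k)
    refine ⟨comb p n sk 0, VP_comb_chance h1 0, ?_⟩
    rw [U_chance, U_chance]
    apply Finset.sum_le_sum
    intro k _
    rw [U_dev_comb]
    exact mul_le_mul_of_nonneg_left (h2 k) (le_of_lt (hw'.2.1 k))
  | node i n cs ih =>
    intro p hp
    have hw' := validWeights_nodeAt p t _ hw hp
    simp only [ValidWeights] at hw'
    obtain ⟨hn, -⟩ := hw'
    have hmp := hm p i n cs hp
    have ha := actor_eq hp
    choose sk h1 h2 using fun k : Fin n => ih k (p ++ [k.val])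
      (by rw [nodeAt_append_some hp]; exact nodeAt_child_node i cs k)
    have hsum : ∑ k : Fin n, σ p k.val = 1 := by rw [← Finset.sum_range]; exact hmp.2
    by_cases hij : i = j
    · subst hij
      obtain ⟨km, -, hkm⟩ := Finset.exists_max_image Finset.univ
        (fun k : Fin n => U σ (cs k) (p ++ [k.val]) i) ⟨⟨0, hn⟩, Finset.mem_univ _⟩
      refine ⟨comb p n sk km.val, VP_comb_node h1 km.isLt, ?_⟩
      have hroot : comb p n sk km.val p = km.val := comb_root p n sk km.val
      rw [U_dev_collapse t σ hp _ (by rw [hroot]; exact km.isLt)]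
      have e1 : U (dev t σ i (comb p n sk km.val))
          (cs ⟨comb p n sk km.val p, by rw [hroot]; exact km.isLt⟩)
          (p ++ [comb p n sk km.val p]) i
          = U (dev t σ i (sk km)) (cs km) (p ++ [km.val]) i := by
        have : (⟨comb p n sk km.val p, by rw [hroot]; exact km.isLt⟩ : Fin n) = km :=
          Fin.ext hroot
        rw [this, hroot]
        exact U_dev_comb t σ i sk km.val p km (cs km) i
      rw [e1]
      refine le_trans ?_ (h2 km)
      rw [U_node]
      have e2 : U σ (cs km) (p ++ [km.val]) i
          = ∑ k : Fin n, σ p k.val * U σ (cs km) (p ++ [km.val]) i := by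
        rw [← Finset.sum_mul, hsum, one_mul]
      conv_rhs => rw [e2]
      apply Finset.sum_le_sum
      intro k _
      exact mul_le_mul_of_nonneg_left (hkm k (Finset.mem_univ k))
        (le_of_lt (hmp.1 k.val k.isLt))
    · have hdev : ∀ s k', dev t σ j s p k' = σ p k' := by
        intro s k'
        simp only [dev, ha, Option.some_inj]
        rw [if_neg hij]
      refine ⟨comb p n sk 0, VP_comb_node h1 hn, ?_⟩
      rw [U_node, U_node]
      apply Finset.sum_le_sum
      intro k _
      rw [hdev, U_dev_comb]
      exact mul_le_mul_of_nonneg_left (h2 k) (le_of_lt (hmp.1 k.val k.isLt))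


end GameTree
namespace GameTree
variable {N : ℕ}

lemma exists_pure_gt (t : GameTree N) (σ : Profile) (j : Fin N) (hw : t.ValidWeights)
    (hm : TotallyMixed t σ) :
    ∀ (t' : GameTree N) (p : List ℕ), t.nodeAt p = some t' →
      ∀ s₀, VP t' p s₀ → U (dev t σ j s₀) t' p j < U σ t' p j →
      ∃ s, VP t' p s ∧ U σ t' p j < U (dev t σ j s) t' p j := by
  intro t'
  induction t' with
  | leaf u =>
    intro p hp s₀ _ hlt
    rw [U_leaf, U_leaf] at hlt
    exact absurd hlt (lt_irrefl _)
  | chance n wt cs ih =>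
    intro p hp s₀ hv0 hlt
    have hw' := validWeights_nodeAt p t _ hw hp
    simp only [ValidWeights] at hw'
    have hchild : ∀ k : Fin n, t.nodeAt (p ++ [k.val]) = some (cs k) := fun k => by
      rw [nodeAt_append_some hp]; exact nodeAt_child_chance wt cs k
    rw [U_chance, U_chance] at hlt
    have hex : ∃ k : Fin n, U (dev t σ j s₀) (cs k) (p ++ [k.val]) j
        < U σ (cs k) (p ++ [k.val]) j := by
      by_contra hno
      push_neg at hno
      exact absurd (Finset.sum_le_sum fun k _ =>
        mul_le_mul_of_nonneg_left (hno k) (le_of_lt (hw'.2.1 k))) (not_le.mpr hlt)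
    obtain ⟨k0, hk0⟩ := hex
    have hv0' : VP (cs k0) (p ++ [k0.val]) s₀ := by
      intro q i m cs' hq
      rw [List.append_assoc, List.singleton_append]
      refine hv0 (k0.val :: q) i m cs' ?_
      simp only [nodeAt, k0.isLt, dif_pos, Fin.eta]
      exact hq
    obtain ⟨s1, hs1v, hs1⟩ := ih k0 (p ++ [k0.val]) (hchild k0) s₀ hv0' hk0
    choose sg hg1 hg2 using fun k : Fin n =>
      exists_pure_ge t σ j hw hm (cs k) (p ++ [k.val]) (hchild k)
    set sk : Fin n → List ℕ → ℕ := fun k => if k = k0 then s1 else sg k with hsk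
    have hske : sk k0 = s1 := by simp [hsk]
    have hvk : ∀ k : Fin n, VP (cs k) (p ++ [k.val]) (sk k) := by
      intro k
      by_cases h : k = k0
      · subst h; rw [hske]; exact hs1v
      · have : sk k = sg k := by simp [hsk, h]
        rw [this]; exact hg1 k
    refine ⟨comb p n sk 0, VP_comb_chance hvk 0, ?_⟩
    rw [U_chance, U_chance]
    refine Finset.sum_lt_sum (fun k _ => ?_) ⟨k0, Finset.mem_univ _, ?_⟩
    · rw [U_dev_comb]
      by_cases h : k = k0
      · subst h
        rw [hske]
        exact mul_le_mul_of_nonneg_left (le_of_lt hs1) (le_of_lt (hw'.2.1 k))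
      · have : sk k = sg k := by simp [hsk, h]
        rw [this]
        exact mul_le_mul_of_nonneg_left (hg2 k) (le_of_lt (hw'.2.1 k))
    · rw [U_dev_comb, hske]
      exact mul_lt_mul_of_pos_left hs1 (hw'.2.1 k0)
  | node i n cs ih =>
    intro p hp s₀ hv0 hlt
    have hw' := validWeights_nodeAt p t _ hw hp
    simp only [ValidWeights] at hw'
    obtain ⟨hn, -⟩ := hw'
    have hmp := hm p i n cs hp
    have ha := actor_eq hp
    have hchild : ∀ k : Fin n, t.nodeAt (p ++ [k.val]) = some (cs k) := fun k => by
      rw [nodeAt_append_some hp]; exact nodeAt_child_node i cs k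
    have hsum : ∑ k : Fin n, σ p k.val = 1 := by rw [← Finset.sum_range]; exact hmp.2
    choose sg hg1 hg2 using fun k : Fin n =>
      exists_pure_ge t σ j hw hm (cs k) (p ++ [k.val]) (hchild k)
    by_cases hij : i = j
    · subst hij
      have hs0 : s₀ p < n := by
        have := hv0 [] i n cs (by simp [nodeAt])
        simpa using this
      set k0 : Fin n := ⟨s₀ p, hs0⟩ with hk0def
      rw [U_dev_collapse t σ hp s₀ hs0] at hlt
      by_cases hcase : ∃ k : Fin n, U σ (node i n cs) p i < U σ (cs k) (p ++ [k.val]) i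
      · obtain ⟨k, hk⟩ := hcase
        refine ⟨comb p n sg k.val, VP_comb_node hg1 k.isLt, ?_⟩
        have hroot : comb p n sg k.val p = k.val := comb_root p n sg k.val
        rw [U_dev_collapse t σ hp _ (by rw [hroot]; exact k.isLt)]
        have e1 : U (dev t σ i (comb p n sg k.val))
            (cs ⟨comb p n sg k.val p, by rw [hroot]; exact k.isLt⟩)
            (p ++ [comb p n sg k.val p]) i
            = U (dev t σ i (sg k)) (cs k) (p ++ [k.val]) i := by
          have h9 : (⟨comb p n sg k.val p, by rw [hroot]; exact k.isLt⟩ : Fin n) = k :=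
            Fin.ext hroot
          rw [h9, hroot]
          exact U_dev_comb t σ i sg k.val p k (cs k) i
        rw [e1]
        exact lt_of_lt_of_le hk (hg2 k)
      · push_neg at hcase
        have hVk0 : U σ (cs k0) (p ++ [k0.val]) i = U σ (node i n cs) p i := by
          by_contra hne
          have hlt2 : U σ (cs k0) (p ++ [k0.val]) i < U σ (node i n cs) p i :=
            lt_of_le_of_ne (hcase k0) hne
          have habs : U σ (node i n cs) p i < U σ (node i n cs) p i := by
            conv_lhs => rw [U_node]
            refine lt_of_lt_of_le (Finset.sum_lt_sum
              (fun k _ => mul_le_mul_of_nonneg_left (hcase k)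
                (le_of_lt (hmp.1 k.val k.isLt)))
              ⟨k0, Finset.mem_univ _, mul_lt_mul_of_pos_left hlt2
                (hmp.1 k0.val k0.isLt)⟩) ?_
            rw [← Finset.sum_mul, hsum, one_mul]
          exact absurd habs (lt_irrefl _)
        have hlt3 : U (dev t σ i s₀) (cs k0) (p ++ [k0.val]) i
            < U σ (cs k0) (p ++ [k0.val]) i := by
          rw [hVk0]; exact hlt
        have hv0' : VP (cs k0) (p ++ [k0.val]) s₀ := by
          intro q i' m cs' hq
          rw [List.append_assoc, List.singleton_append]
          refine hv0 (k0.val :: q) i' m cs' ?_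
          simp only [nodeAt, k0.isLt, dif_pos, Fin.eta]
          exact hq
        obtain ⟨s1, hs1v, hs1⟩ := ih k0 (p ++ [k0.val]) (hchild k0) s₀ hv0' hlt3
        set sk : Fin n → List ℕ → ℕ := fun k => if k = k0 then s1 else sg k with hsk
        have hske : sk k0 = s1 := by simp [hsk]
        have hvk : ∀ k : Fin n, VP (cs k) (p ++ [k.val]) (sk k) := by
          intro k
          by_cases h : k = k0
          · subst h; rw [hske]; exact hs1v
          · have : sk k = sg k := by simp [hsk, h]
            rw [this]; exact hg1 k
        refine ⟨comb p n sk k0.val, VP_comb_node hvk k0.isLt, ?_⟩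
        have hroot : comb p n sk k0.val p = k0.val := comb_root p n sk k0.val
        rw [U_dev_collapse t σ hp _ (by rw [hroot]; exact k0.isLt)]
        have e1 : U (dev t σ i (comb p n sk k0.val))
            (cs ⟨comb p n sk k0.val p, by rw [hroot]; exact k0.isLt⟩)
            (p ++ [comb p n sk k0.val p]) i
            = U (dev t σ i (sk k0)) (cs k0) (p ++ [k0.val]) i := by
          have h9 : (⟨comb p n sk k0.val p, by rw [hroot]; exact k0.isLt⟩ : Fin n) = k0 :=
            Fin.ext hroot
          rw [h9, hroot]
          exact U_dev_comb t σ i sk k0.val p k0 (cs k0) i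
        rw [e1, hske]
        rw [← hVk0]
        exact hs1
    · have hdev : ∀ s (k' : ℕ), dev t σ j s p k' = σ p k' := by
        intro s k'
        simp only [dev, ha, Option.some_inj]
        rw [if_neg hij]
      rw [U_node, U_node] at hlt
      simp only [hdev] at hlt
      have hex : ∃ k : Fin n, U (dev t σ j s₀) (cs k) (p ++ [k.val]) j
          < U σ (cs k) (p ++ [k.val]) j := by
        by_contra hno
        push_neg at hno
        exact absurd (Finset.sum_le_sum fun k _ =>
          mul_le_mul_of_nonneg_left (hno k) (le_of_lt (hmp.1 k.val k.isLt)))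
          (not_le.mpr hlt)
      obtain ⟨k0, hk0⟩ := hex
      have hv0' : VP (cs k0) (p ++ [k0.val]) s₀ := by
        intro q i' m cs' hq
        rw [List.append_assoc, List.singleton_append]
        refine hv0 (k0.val :: q) i' m cs' ?_
        simp only [nodeAt, k0.isLt, dif_pos, Fin.eta]
        exact hq
      obtain ⟨s1, hs1v, hs1⟩ := ih k0 (p ++ [k0.val]) (hchild k0) s₀ hv0' hk0
      set sk : Fin n → List ℕ → ℕ := fun k => if k = k0 then s1 else sg k with hsk
      have hske : sk k0 = s1 := by simp [hsk]
      have hvk : ∀ k : Fin n, VP (cs k) (p ++ [k.val]) (sk k) := by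
        intro k
        by_cases h : k = k0
        · subst h; rw [hske]; exact hs1v
        · have : sk k = sg k := by simp [hsk, h]
          rw [this]; exact hg1 k
      refine ⟨comb p n sk 0, VP_comb_node hvk hn, ?_⟩
      rw [U_node, U_node]
      simp only [hdev]
      refine Finset.sum_lt_sum (fun k _ => ?_) ⟨k0, Finset.mem_univ _, ?_⟩
      · rw [U_dev_comb]
        by_cases h : k = k0
        · subst h
          rw [hske]
          exact mul_le_mul_of_nonneg_left (le_of_lt hs1) (le_of_lt (hmp.1 k.val k.isLt))
        · have : sk k = sg k := by simp [hsk, h]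
          rw [this]
          exact mul_le_mul_of_nonneg_left (hg2 k) (le_of_lt (hmp.1 k.val k.isLt))
      · rw [U_dev_comb, hske]
        exact mul_lt_mul_of_pos_left hs1 (hmp.1 k0.val k0.isLt)

end GameTree
namespace GameTree
variable {N : ℕ}

/-- Extension of a subgame pure strategy to the full game, steering toward `ν`. -/
def pext (ν : List ℕ) (s : List ℕ → ℕ) : List ℕ → ℕ :=
  fun q => if ν <+: q then s (q.drop ν.length) else if q <+: ν then ν.getD q.length 0 else 0

lemma pext_app (ν : List ℕ) (s : List ℕ → ℕ) (q : List ℕ) : pext ν s (ν ++ q) = s q := by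
  simp [pext, List.prefix_append, List.drop_left]

lemma pext_prefix (ν : List ℕ) (s : List ℕ → ℕ) (q : List ℕ) (h1 : q <+: ν) (h2 : q ≠ ν) :
    pext ν s q = ν.getD q.length 0 := by
  have hno : ¬ ν <+: q := by
    intro h
    exact h2 (h1.eq_of_length (le_antisymm h1.length_le h.length_le))
  simp [pext, hno, h1]

lemma pext_off (ν : List ℕ) (s₁ s₂ : List ℕ → ℕ) (q : List ℕ) (h : ¬ ν <+: q) :
    pext ν s₁ q = pext ν s₂ q := by
  simp [pext, h]

lemma pext_valid {t t' : GameTree N} {ν : List ℕ} (hν : t.nodeAt ν = some t')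
    (hw : t.ValidWeights) {s : List ℕ → ℕ} (hs : ValidPure t' s) :
    ValidPure t (pext ν s) := by
  intro p i m cs hp
  by_cases h1 : ν <+: p
  · obtain ⟨r, rfl⟩ := h1
    rw [pext_app]
    exact hs r i m cs (by rw [← nodeAt_append_some hν r]; exact hp)
  · by_cases h2 : p <+: ν
    · obtain ⟨u, hu⟩ := h2
      cases u with
      | nil =>
        have : p = ν := by simpa using hu
        subst this
        exact absurd (List.prefix_refl p) h1
      | cons d r' =>
        have hne : p ≠ ν := by
          intro h
          subst h
          exact h1 (List.prefix_refl p)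
        have hp2 : pext ν s p = d := by
          rw [pext_prefix ν s p ⟨d :: r', hu⟩ hne, ← hu, getD_append_cons]
        rw [hp2]
        exact branch_lt hp (by rw [hu]; exact hν)
    · have h0 : pext ν s p = 0 := by simp [pext, h1, h2]
      rw [h0]
      have hvw := validWeights_nodeAt p t _ hw hp
      simp only [ValidWeights] at hvw
      exact hvw.1

lemma valid_of_VP_nil {t : GameTree N} {s : List ℕ → ℕ} (h : VP t [] s) : ValidPure t s :=
  fun p i m cs hp => h p i m cs hp

lemma VP_of_valid {t : GameTree N} {s : List ℕ → ℕ} (h : ValidPure t s) : VP t [] s :=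
  fun p i m cs hp => h p i m cs hp

/-- Full-game indifference for a totally mixed Nash equilibrium. -/
lemma dev_util_eq {t : GameTree N} {σ : Profile} (hw : t.ValidWeights)
    (hm : TotallyMixed t σ) (hn : IsNash t σ) (j : Fin N) {s : List ℕ → ℕ}
    (hs : ValidPure t s) : util (dev t σ j s) t j = util σ t j := by
  by_contra hne
  have hlt : util (dev t σ j s) t j < util σ t j := lt_of_le_of_ne (hn j s hs) hne
  obtain ⟨s1, hs1v, hs1⟩ := exists_pure_gt t σ j hw hm t [] (by simp [nodeAt]) s (VP_of_valid hs)
    (by rw [util_eq_U, util_eq_U] at hlt; exact hlt)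
  have := hn j s1 (valid_of_VP_nil hs1v)
  rw [util_eq_U, util_eq_U] at this
  exact absurd hs1 (not_lt.mpr this)

lemma induced_dev {t t' : GameTree N} {ν : List ℕ} (hν : t.nodeAt ν = some t')
    (σ : Profile) (j : Fin N) (s : List ℕ → ℕ) :
    induced (dev t σ j s) ν = dev t' (induced σ ν) j (fun q => s (ν ++ q)) := by
  funext q k
  simp only [induced, dev, actor_append hν, pureProfile]

end GameTree
open GameTree in
/-- every totally mixed Nash equilibrium of a finite extensive-form
game (with perfect information) is subgame perfect. -/
theorem totallyMixed_nash_subgamePerfect {N : ℕ} (t : GameTree N) (hw : t.ValidWeights)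
    (σ : GameTree.Profile) (hm : TotallyMixed t σ) (hn : IsNash t σ) :
    IsSubgamePerfect t σ := by
  intro ν t' hν j s hs
  obtain ⟨s₂0, hs₂v, hs₂le⟩ := exists_pure_le t σ j hw hm t' ν hν
  have hs₂'v : ValidPure t' (fun q => s₂0 (ν ++ q)) := fun q i m cs hq => hs₂v q i m cs hq
  have hA : util (dev t' (induced σ ν) j (fun q => s₂0 (ν ++ q))) t' j
      ≤ util (induced σ ν) t' j := by
    rw [U_shift (dev t σ j s₂0) t' ν j, U_shift σ t' ν j, induced_dev hν σ j s₂0] at hs₂le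
    exact hs₂le
  suffices hB : util (dev t' (induced σ ν) j s) t' j
      = util (dev t' (induced σ ν) j (fun q => s₂0 (ν ++ q))) t' j by
    rw [hB]; exact hA
  have hvA : ValidPure t (pext ν s) := pext_valid hν hw hs
  have hvB : ValidPure t (pext ν (fun q => s₂0 (ν ++ q))) := pext_valid hν hw hs₂'v
  have hEq : U (dev t σ j (pext ν s)) t [] j
      = U (dev t σ j (pext ν (fun q => s₂0 (ν ++ q)))) t [] j := by
    rw [← util_eq_U, ← util_eq_U, dev_util_eq hw hm hn j hvA, dev_util_eq hw hm hn j hvB]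
  have hagree : ∀ q, ¬ ν <+: q →
      dev t σ j (pext ν s) ([] ++ q) = dev t σ j (pext ν (fun q => s₂0 (ν ++ q))) ([] ++ q) := by
    intro q hq
    funext k
    simp only [List.nil_append, dev, pureProfile]
    simp only [pext_off ν s (fun q => s₂0 (ν ++ q)) q hq]
  have hsub := U_sub j ν t [] t' hν hagree
  simp only [List.nil_append] at hsub
  have hzero : U (dev t σ j (pext ν s)) t [] j
      - U (dev t σ j (pext ν (fun q => s₂0 (ν ++ q)))) t [] j = 0 := by
    rw [hEq]; ring
  have hP : 0 < pathProb (dev t σ j (pext ν s)) t [] ν := by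
    apply pathProb_pos ν t []
    · rw [hν]; rfl
    · exact hw
    · intro q k r i m cs hr hq
      subst hr
      have hk : k < m := branch_lt hq hν
      have ha := actor_eq hq
      by_cases hij : i = j
      · subst hij
        simp only [List.nil_append, dev, ha, if_pos rfl, pureProfile]
        have hv : pext (q ++ k :: r) s q = k := by
          rw [pext_prefix _ s q ⟨k :: r, rfl⟩
            (by intro h; have := congrArg List.length h; simp at this), getD_append_cons]
        simp [hv]
      · have hd : dev t σ j (pext (q ++ k :: r) s) ([] ++ q) k = σ q k := by
          simp only [List.nil_append, dev, ha, Option.some_inj]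
          rw [if_neg hij]
        rw [hd]
        exact (hm q i m cs hq).1 k hk
  have hΔ : U (dev t σ j (pext ν s)) t' ν j
      = U (dev t σ j (pext ν (fun q => s₂0 (ν ++ q)))) t' ν j := by
    rw [hzero] at hsub
    have h0 := (mul_eq_zero.mp hsub.symm).resolve_left (ne_of_gt hP)
    linarith [h0]
  rw [U_shift, U_shift, induced_dev hν, induced_dev hν] at hΔ
  have e1 : (fun q => pext ν s (ν ++ q)) = s := funext fun q => pext_app ν s q
  have e2 : (fun q => pext ν (fun q => s₂0 (ν ++ q)) (ν ++ q)) = (fun q => s₂0 (ν ++ q)) :=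
    funext fun q => pext_app ν _ q
  rw [e1, e2] at hΔ
  exact hΔ
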